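/- Fix ω ∈ ℂ with Im ω > 0 and λ ∈ ℂ with exp(-Im ω) < |λ| ≤ 1, and set μ = Log λ/(ω - conj(ω)) (principal complex logarithm) and α = i·Log λ/(2·Im ω), so that α = -μ. Let β : ℂ → ℂ be smooth and let f : ℂ → ℂ be smooth with f(z + 2π) = f(z), f(z + ω) = λ·f(z), and ∂_{z̄}f(z) + β(z)·conj(f(z)) = 0 for all z ∈ ℂ. Define g(z) = f(z)·exp(-μ·(z - conj(z))). Then g is doubly periodic, g(z + 2π) = g(z) and g(z + ω) = g(z) for all z, and g satisfies the equation ∂_{z̄}g(z) + α·g(z) + β̃(z)·conj(g(z)) = 0 for all z, where β̃(z) = β(z)·exp(-(μ + conj(μ))·(z - conj(z))); moreover |β̃(z)| = |β(z)| for all z. -/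

import Mathlib

open ComplexConjugate

/-- The Wirtinger derivative `∂_{z̄}f(z) = (1/2)(∂f/∂x(z) + i·∂f/∂y(z))`. -/
noncomputable def wirtingerZbar (f : ℂ → ℂ) (z : ℂ) : ℂ :=
  (1/2 : ℂ) * (fderiv ℝ f z 1 + Complex.I * fderiv ℝ f z Complex.I)

/-- Proposition 6.5 of the paper: after the change of trivialization
`g(z) = f(z)·exp(-μ(z - z̄))`, a solution of `f_{z̄} + β·conj(f) = 0` with multiplier
`λ` becomes a doubly periodic solution of `g_{z̄} + α·g + β̃·conj(g) = 0` with constant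
coefficient `α = i·Log λ/(2 Im ω) = -μ` and `|β̃| = |β|`. -/
theorem constant_coefficient_linearized_equation
    (ω lam : ℂ) (hω : 0 < ω.im)
    (hlam1 : Real.exp (-ω.im) < ‖lam‖) (hlam2 : ‖lam‖ ≤ 1)
    (μ α : ℂ)
    (hμ : μ = Complex.log lam / (ω - conj ω))
    (hα : α = Complex.I * Complex.log lam / (2 * (ω.im : ℂ)))
    (β : ℂ → ℂ) (hβ : ContDiff ℝ (⊤ : ℕ∞) β)
    (f : ℂ → ℂ) (hf : ContDiff ℝ (⊤ : ℕ∞) f)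
    (hf1 : ∀ z, f (z + 2 * Real.pi) = f z)
    (hf2 : ∀ z, f (z + ω) = lam * f z)
    (hfeq : ∀ z, wirtingerZbar f z + β z * conj (f z) = 0) :
    α = -μ ∧
    (∀ z, (fun w => f w * Complex.exp (-μ * (w - conj w))) (z + 2 * Real.pi)
      = (fun w => f w * Complex.exp (-μ * (w - conj w))) z) ∧
    (∀ z, (fun w => f w * Complex.exp (-μ * (w - conj w))) (z + ω)
      = (fun w => f w * Complex.exp (-μ * (w - conj w))) z) ∧
    (∀ z, wirtingerZbar (fun w => f w * Complex.exp (-μ * (w - conj w))) z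
        + α * (f z * Complex.exp (-μ * (z - conj z)))
        + (β z * Complex.exp (-(μ + conj μ) * (z - conj z)))
          * conj (f z * Complex.exp (-μ * (z - conj z))) = 0) ∧
    (∀ z, ‖β z * Complex.exp (-(μ + conj μ) * (z - conj z))‖
      = ‖β z‖) := by
  have hlam0 : lam ≠ 0 := by
    intro h
    rw [h, norm_zero] at hlam1
    exact absurd hlam1 (not_lt.2 (Real.exp_pos _).le)
  have him : (ω.im : ℂ) ≠ 0 := by
    exact_mod_cast (Complex.ofReal_ne_zero.2 (ne_of_gt hω))
  have hsub : ω - conj ω = (2 * ω.im : ℝ) * Complex.I := Complex.sub_conj ω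
  have hsub0 : ω - conj ω ≠ 0 := by
    rw [hsub]
    push_cast
    simp [Complex.I_ne_zero, ne_of_gt hω]
  have hαμ : α = -μ := by
    rw [hα, hμ, hsub]
    push_cast
    field_simp
    ring_nf
    rw [Complex.I_sq]
    ring
  -- derivative of the exponential factor
  set E : ℂ → ℂ := fun w => Complex.exp (-μ * (w - conj w)) with hE
  have hμω : -μ * (ω - conj ω) = -Complex.log lam := by
    rw [hμ]; field_simp
  refine ⟨hαμ, ?_, ?_, ?_, ?_⟩
  · intro z
    simp only [hf1]
    congr 2
    have : conj ((2 * Real.pi : ℝ) : ℂ) = ((2 * Real.pi : ℝ) : ℂ) := Complex.conj_ofReal _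
    push_cast at this ⊢
    rw [map_add, this]
    ring
  · intro z
    simp only [hf2]
    rw [map_add, show -μ * (z + ω - (conj z + conj ω)) = -μ * (z - conj z) + -μ * (ω - conj ω) by ring,
      Complex.exp_add, hμω, Complex.exp_neg, Complex.exp_log hlam0]
    field_simp
  · intro z
    -- the linear map: derivative of w ↦ -μ*(w - conj w)
    set L : ℂ →L[ℝ] ℂ :=
      (-μ) • (ContinuousLinearMap.id ℝ ℂ - Complex.conjCLE.toContinuousLinearMap) with hL
    have hLapp : ∀ v : ℂ, L v = -μ * (v - conj v) := by
      intro v; simp [hL, mul_sub]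
    have hlin : HasFDerivAt (fun w : ℂ => -μ * (w - conj w)) L z := by
      have h : (fun w : ℂ => -μ * (w - conj w)) = fun w => L w :=
        funext fun w => (hLapp w).symm
      rw [h]; exact L.hasFDerivAt
    have hEder : HasFDerivAt E (E z • L) z := hlin.cexp
    have hfd : DifferentiableAt ℝ f z := (hf.differentiable (by simp)) z
    have hgder : HasFDerivAt (fun w => f w * E w)
        (f z • (E z • L) + E z • fderiv ℝ f z) z :=
      hfd.hasFDerivAt.mul hEder
    have hgfd : fderiv ℝ (fun w => f w * E w) z = f z • (E z • L) + E z • fderiv ℝ f z :=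
      hgder.fderiv
    have hL1 : L 1 = 0 := by rw [hLapp]; simp
    have hLI : L Complex.I = -μ * (2 * Complex.I) := by
      rw [hLapp, Complex.conj_I]; ring
    have hwg : wirtingerZbar (fun w => f w * E w) z
        = E z * wirtingerZbar f z + μ * (f z * E z) := by
      rw [wirtingerZbar, hgfd]
      simp only [ContinuousLinearMap.add_apply, ContinuousLinearMap.smul_apply, hL1, hLI,
        smul_eq_mul, wirtingerZbar]
      linear_combination (-(μ * f z * E z)) * Complex.I_sq
    have hfz : wirtingerZbar f z = -(β z * conj (f z)) := by
      have := hfeq z; linear_combination this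
    have hconjE : conj (E z) = Complex.exp (conj μ * (z - conj z)) := by
      rw [hE]
      simp only [← Complex.exp_conj, map_mul, map_neg, map_sub, Complex.conj_conj]
      ring_nf
    have hkey : Complex.exp (-(μ + conj μ) * (z - conj z)) * conj (E z) = E z := by
      rw [hconjE, hE, ← Complex.exp_add]
      congr 1; ring
    calc wirtingerZbar (fun w => f w * E w) z + α * (f z * E z)
          + (β z * Complex.exp (-(μ + conj μ) * (z - conj z))) * conj (f z * E z)
        = E z * wirtingerZbar f z + μ * (f z * E z) + α * (f z * E z)
          + β z * conj (f z) * (Complex.exp (-(μ + conj μ) * (z - conj z)) * conj (E z)) := by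
          rw [hwg, map_mul]; ring
      _ = E z * (-(β z * conj (f z))) + μ * (f z * E z) + (-μ) * (f z * E z)
          + β z * conj (f z) * E z := by rw [hfz, hαμ, hkey]
      _ = 0 := by ring
  · intro z
    rw [norm_mul, Complex.norm_exp]
    have : (-(μ + conj μ) * (z - conj z)).re = 0 := by
      have h1 : (μ + conj μ).im = 0 := by simp [Complex.add_im]
      have h2 : (z - conj z).re = 0 := by simp [Complex.sub_re]
      simp [Complex.mul_re, Complex.neg_re, Complex.neg_im, h1, h2]
    rw [this, Real.exp_zero, mul_one]
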